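/- arXiv:2410.03575 — 2 statements merged into one kernel-verified Lean document; each statement's English description precedes it below -/
import Mathlib

section
/- Let A ∈ ℂ^{n×n}, B ∈ ℂ^{d×d}, E ∈ ℂ^{n×d}, and let s ≥ 0 be an integer. Define X₀ = exp(2^{-s}A), Y₀ = exp(2^{-s}B), D₀ = L_exp(2^{-s}A, 2^{-s}B, 2^{-s}E), and recursively for i = 0, …, s−1: D_{i+1} = X_i D_i + D_i Y_i, X_{i+1} = X_i², Y_{i+1} = Y_i². Then X_s = exp(A), Y_s = exp(B), and D_s = L_exp(A, B, E). -/
open NormedSpace Matrix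

/-- `L_exp(A, B, E)` is the `(1,2)` block of `exp [[A, E],[0, B]]`. -/
noncomputable def Lexp {n d : ℕ} (A : Matrix (Fin n) (Fin n) ℂ) (B : Matrix (Fin d) (Fin d) ℂ)
    (E : Matrix (Fin n) (Fin d) ℂ) : Matrix (Fin n) (Fin d) ℂ :=
  (NormedSpace.exp (Matrix.fromBlocks A E 0 B)).toBlocks₁₂

section aux

variable {n d : ℕ}

private lemma tsum_submatrix {l m l' m' : Type*} [Fintype l] [Fintype m]
    {F : ℕ → Matrix l m ℂ} (hf : Summable F) (e : l' → l) (f : m' → m) :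
    (∑' k, F k).submatrix e f = ∑' k, (F k).submatrix e f := by
  have g : Matrix l m ℂ →+ Matrix l' m' ℂ :=
    AddMonoidHom.mk' (fun M => M.submatrix e f) (fun M N => by simp [Matrix.submatrix_add])
  exact (hf.hasSum.map (AddMonoidHom.mk' (fun M : Matrix l m ℂ => M.submatrix e f)
    (fun M N => by simp [Matrix.submatrix_add]))
    (continuous_id.matrix_submatrix e f)).tsum_eq.symm

private lemma pow_blocks (A : Matrix (Fin n) (Fin n) ℂ) (B : Matrix (Fin d) (Fin d) ℂ)
    (E : Matrix (Fin n) (Fin d) ℂ) (k : ℕ) :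
    ∃ F, (Matrix.fromBlocks A E 0 B) ^ k = Matrix.fromBlocks (A ^ k) F 0 (B ^ k) := by
  induction k with
  | zero => exact ⟨0, by simp [Matrix.fromBlocks_one]⟩
  | succ k ih =>
    obtain ⟨F, hF⟩ := ih
    refine ⟨A ^ k * E + F * B, ?_⟩
    rw [pow_succ, hF, Matrix.fromBlocks_multiply]
    simp [pow_succ]

private lemma exp_fromBlocks (A : Matrix (Fin n) (Fin n) ℂ) (B : Matrix (Fin d) (Fin d) ℂ)
    (E : Matrix (Fin n) (Fin d) ℂ) :
    NormedSpace.exp (Matrix.fromBlocks A E 0 B) =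
      Matrix.fromBlocks (NormedSpace.exp A) (Lexp A B E) 0 (NormedSpace.exp B) := by
  letI : SeminormedRing (Matrix (Fin n ⊕ Fin d) (Fin n ⊕ Fin d) ℂ) :=
    Matrix.linftyOpSemiNormedRing
  letI : NormedRing (Matrix (Fin n ⊕ Fin d) (Fin n ⊕ Fin d) ℂ) := Matrix.linftyOpNormedRing
  letI : NormedAlgebra ℂ (Matrix (Fin n ⊕ Fin d) (Fin n ⊕ Fin d) ℂ) :=
    Matrix.linftyOpNormedAlgebra
  set M := Matrix.fromBlocks A E 0 B with hM
  have hs : Summable fun k : ℕ => ((k.factorial : ℂ))⁻¹ • M ^ k := expSeries_summable' (𝕂 := ℂ) M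
  have h11 : (NormedSpace.exp M).toBlocks₁₁ = NormedSpace.exp A := by
    show (NormedSpace.exp M).submatrix Sum.inl Sum.inl = _
    rw [exp_eq_tsum (𝕂 := ℂ), tsum_submatrix hs, exp_eq_tsum (𝕂 := ℂ)]
    congr 1; funext k
    obtain ⟨F, hF⟩ := pow_blocks A B E k
    rw [Matrix.submatrix_smul, hF]
    congr 1
  have h21 : (NormedSpace.exp M).toBlocks₂₁ = 0 := by
    show (NormedSpace.exp M).submatrix Sum.inr Sum.inl = _
    rw [exp_eq_tsum (𝕂 := ℂ), tsum_submatrix hs]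
    have : ∀ k : ℕ, (((k.factorial : ℂ))⁻¹ • (M ^ k)).submatrix Sum.inr Sum.inl = (0 : Matrix (Fin d) (Fin n) ℂ) := by
      intro k
      obtain ⟨F, hF⟩ := pow_blocks A B E k
      rw [Matrix.submatrix_smul, hF]
      show ((k.factorial : ℂ))⁻¹ • (Matrix.fromBlocks (A ^ k) F 0 (B ^ k)).toBlocks₂₁ = 0
      simp
    simp only [this, tsum_zero]
  have h22 : (NormedSpace.exp M).toBlocks₂₂ = NormedSpace.exp B := by
    show (NormedSpace.exp M).submatrix Sum.inr Sum.inr = _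
    rw [exp_eq_tsum (𝕂 := ℂ), tsum_submatrix hs, exp_eq_tsum (𝕂 := ℂ)]
    congr 1; funext k
    obtain ⟨F, hF⟩ := pow_blocks A B E k
    rw [Matrix.submatrix_smul, hF]
    congr 1
  conv_lhs => rw [← Matrix.fromBlocks_toBlocks (NormedSpace.exp M)]
  rw [h11, h21, h22]
  rfl

end aux

/-- Exact-arithmetic correctness of the squaring phase: starting from
`X₀ = exp(2⁻ˢA)`, `Y₀ = exp(2⁻ˢB)`, `D₀ = L_exp(2⁻ˢA, 2⁻ˢB, 2⁻ˢE)` and applying the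
recurrence `D_{i+1} = X_i D_i + D_i Y_i`, `X_{i+1} = X_i²`, `Y_{i+1} = Y_i²` for
`i = 0, …, s−1`, one obtains `X_s = exp(A)`, `Y_s = exp(B)`, `D_s = L_exp(A, B, E)`. -/
theorem squaring_phase_exact {n d : ℕ} (A : Matrix (Fin n) (Fin n) ℂ)
    (B : Matrix (Fin d) (Fin d) ℂ) (E : Matrix (Fin n) (Fin d) ℂ) (s : ℕ)
    (X : ℕ → Matrix (Fin n) (Fin n) ℂ) (Y : ℕ → Matrix (Fin d) (Fin d) ℂ)
    (D : ℕ → Matrix (Fin n) (Fin d) ℂ)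
    (hX0 : X 0 = NormedSpace.exp ((((2 : ℂ) ^ s)⁻¹) • A))
    (hY0 : Y 0 = NormedSpace.exp ((((2 : ℂ) ^ s)⁻¹) • B))
    (hD0 : D 0 = Lexp ((((2 : ℂ) ^ s)⁻¹) • A) ((((2 : ℂ) ^ s)⁻¹) • B) ((((2 : ℂ) ^ s)⁻¹) • E))
    (hD : ∀ i < s, D (i + 1) = X i * D i + D i * Y i)
    (hX : ∀ i < s, X (i + 1) = X i ^ 2)
    (hY : ∀ i < s, Y (i + 1) = Y i ^ 2) :
    X s = NormedSpace.exp A ∧ Y s = NormedSpace.exp B ∧ D s = Lexp A B E := by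
  set M := Matrix.fromBlocks A E 0 B with hM
  have key : ∀ i ≤ s, Matrix.fromBlocks (X i) (D i) 0 (Y i) =
      NormedSpace.exp ((((2 : ℂ) ^ (s - i))⁻¹) • M) := by
    intro i hi
    induction i with
    | zero =>
      rw [hX0, hY0, hD0, Nat.sub_zero, hM, Matrix.fromBlocks_smul, smul_zero,
        exp_fromBlocks]
    | succ i ih =>
      have hi' : i < s := lt_of_lt_of_le (Nat.lt_succ_self i) hi
      have ihe := ih hi'.le
      have hsub : s - i = (s - (i + 1)) + 1 := by omega
      have hsmul : (2 : ℕ) • ((((2 : ℂ) ^ (s - i))⁻¹) • M) =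
          (((2 : ℂ) ^ (s - (i + 1)))⁻¹) • M := by
        rw [← Nat.cast_smul_eq_nsmul ℂ, smul_smul]
        congr 1
        rw [hsub]
        push_cast
        field_simp
        ring
      rw [hX i hi', hY i hi', hD i hi', ← hsmul, Matrix.exp_nsmul, ← ihe, sq, sq, sq,
        Matrix.fromBlocks_multiply]
      simp
  have hfin := key s le_rfl
  rw [Nat.sub_self, pow_zero, inv_one, one_smul, hM, exp_fromBlocks] at hfin
  refine ⟨?_, ?_, ?_⟩
  · simpa using congrArg Matrix.toBlocks₁₁ hfin
  · simpa using congrArg Matrix.toBlocks₂₂ hfin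
  · simpa using congrArg Matrix.toBlocks₁₂ hfin
end

section
/- Let A ∈ ℂ^{n×n}. The matrix exponential exp : ℂ^{n×n} → ℂ^{n×n} is Fréchet differentiable at A, and its Fréchet derivative at A is the linear map E ↦ L_exp(A, A, E); that is, HasFDerivAt exp (E ↦ L_exp(A, A, E)) A, where the map E ↦ L_exp(A, A, E) is ℂ-linear and continuous. -/
attribute [local instance] Matrix.linftyOpNormedRing Matrix.linftyOpNormedAlgebra

section aux

variable {n : ℕ}

local notation "M" => Matrix (Fin n) (Fin n) ℂ
local notation "ML" => @ContinuousLinearMap ℂ ℂ _ _ (RingHom.id ℂ) M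
    (@UniformSpace.toTopologicalSpace M (@PseudoMetricSpace.toUniformSpace M _)) _ M
    (@UniformSpace.toTopologicalSpace M (@PseudoMetricSpace.toUniformSpace M _)) _ _ _

/-- The derivative of `x ↦ x ^ k` at `x`. -/
noncomputable def powDeriv (k : ℕ) (x : M) : ML :=
  ∑ i ∈ Finset.range k, ContinuousLinearMap.mulLeftRight ℂ M (x ^ i) (x ^ (k - 1 - i))

lemma powDeriv_apply (k : ℕ) (x E : M) :
    powDeriv k x E = ∑ i ∈ Finset.range k, x ^ i * E * x ^ (k - 1 - i) := by
  simp [powDeriv, ContinuousLinearMap.sum_apply, ContinuousLinearMap.mulLeftRight_apply]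

lemma hasFDerivAt_pow_aux (k : ℕ) (x : M) :
    HasFDerivAt (fun y : M => y ^ k) (powDeriv k x) x := by
  induction k with
  | zero =>
      simp only [powDeriv, Finset.range_zero, Finset.sum_empty, pow_zero]
      exact hasFDerivAt_const (1 : M) x
  | succ k ih =>
      have h := ih.mul' (hasFDerivAt_id x)
      simp only [id_eq] at h
      have heq : ((fun y : M => y ^ k) * id) = fun y : M => y ^ (k + 1) := by
        funext y; rw [pow_succ]; rfl
      rw [heq] at h
      refine h.congr_fderiv (Eq.symm ?_)
      refine ContinuousLinearMap.ext fun E => ?_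
      simp only [powDeriv_apply, ContinuousLinearMap.add_apply,
        ContinuousLinearMap.smul_apply, ContinuousLinearMap.smulRight_apply,
        ContinuousLinearMap.coe_id', id_eq, smul_eq_mul, MulOpposite.smul_eq_mul_unop,
          MulOpposite.unop_op]
      rw [Finset.sum_range_succ]
      have h1 : ∀ i ∈ Finset.range k,
          x ^ i * E * x ^ (k + 1 - 1 - i) = x ^ i * E * x ^ (k - 1 - i) * x := by
        intro i hi
        rw [Finset.mem_range] at hi
        have hk : k + 1 - 1 - i = (k - 1 - i) + 1 := by omega
        rw [hk, pow_succ, ← mul_assoc]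
      rw [Finset.sum_congr rfl h1, ← Finset.sum_mul]
      have hk2 : k + 1 - 1 - k = 0 := by omega
      rw [hk2, pow_zero, mul_one, add_comm]
      rfl
  
set_option synthInstance.maxHeartbeats 1000000 in
set_option maxHeartbeats 1000000 in
lemma norm_one_le_aux : ‖(1 : M)‖ ≤ 1 := by
  rcases Nat.eq_zero_or_pos n with h | h
  · have h0 : (1 : M) = 0 := by
      ext i j
      exact absurd i.isLt (by omega)
    rw [h0, norm_zero]; norm_num
  · haveI : Nonempty (Fin n) := ⟨⟨0, h⟩⟩
    exact le_of_eq Matrix.linfty_opNormOneClass.norm_one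

lemma norm_pow_le_aux (x : M) (i : ℕ) : ‖x ^ i‖ ≤ max 1 ‖x‖ ^ i := by
  induction i with
  | zero => rw [pow_zero, pow_zero]; exact norm_one_le_aux
  | succ i ih =>
      rw [pow_succ, pow_succ]
      calc ‖x ^ i * x‖ ≤ ‖x ^ i‖ * ‖x‖ := norm_mul_le _ _
        _ ≤ max 1 ‖x‖ ^ i * max 1 ‖x‖ :=
            mul_le_mul ih (le_max_right _ _) (norm_nonneg _) (by positivity)

lemma fromBlocks_pow (A E : M) (k : ℕ) :
    (Matrix.fromBlocks A E 0 A) ^ k =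
      Matrix.fromBlocks (A ^ k) (∑ i ∈ Finset.range k, A ^ i * E * A ^ (k - 1 - i)) 0 (A ^ k) := by
  induction k with
  | zero => simp [Matrix.fromBlocks_one]
  | succ k ih =>
      rw [pow_succ, ih, Matrix.fromBlocks_multiply]
      rw [Matrix.fromBlocks_inj]
      refine ⟨by simp [pow_succ], ?_, by simp, by simp [pow_succ]⟩
      have h1 : ∀ i ∈ Finset.range k,
          A ^ i * E * A ^ (k - 1 - i) * A = A ^ i * E * A ^ (k + 1 - 1 - i) := by
        intro i hi
        rw [Finset.mem_range] at hi
        have hk : k + 1 - 1 - i = (k - 1 - i) + 1 := by omega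
        rw [hk, pow_succ, ← mul_assoc]
      rw [Finset.sum_mul, Finset.sum_congr rfl h1, Finset.sum_range_succ,
        show k + 1 - 1 - k = 0 by omega, pow_zero, mul_one, add_comm]

lemma clm_completeSpace_aux {E F : Type*} [NormedAddCommGroup E] [NormedSpace ℂ E]
    [NormedAddCommGroup F] [NormedSpace ℂ F] [CompleteSpace F] :
    CompleteSpace (E →L[ℂ] F) := inferInstance

end aux

set_option synthInstance.maxHeartbeats 1000000 in
set_option maxHeartbeats 1000000 in
/-- The matrix exponential is Fréchet differentiable at `A`, with Fréchet derivative
the continuous `ℂ`-linear map `E ↦ L_exp(A, A, E)`. -/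
theorem hasFDerivAt_exp_Lexp {n : ℕ} (A : Matrix (Fin n) (Fin n) ℂ) :
    ∃ f : Matrix (Fin n) (Fin n) ℂ →L[ℂ] Matrix (Fin n) (Fin n) ℂ,
      (∀ E : Matrix (Fin n) (Fin n) ℂ, f E = Lexp A A E) ∧
      HasFDerivAt NormedSpace.exp f A := by
  classical
  set R : ℝ := ‖A‖ + 1 with hR
  have hR1 : (1 : ℝ) ≤ R := by have := norm_nonneg A; simp only [hR]; linarith
  have hR0 : (0 : ℝ) ≤ R := by linarith
  -- the summable bound
  set u : ℕ → ℝ := fun k => (k : ℝ) * R ^ (k - 1) / (k.factorial : ℝ) with hu_def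
  have hu : Summable u := by
    rw [← summable_nat_add_iff 1]
    have heq2 : ∀ k : ℕ, u (k + 1) = R ^ k / (k.factorial : ℝ) := by
      intro k
      have h1 : ((k : ℝ) + 1) ≠ 0 := by positivity
      simp only [hu_def]
      rw [Nat.add_sub_cancel, Nat.factorial_succ]
      push_cast
      rw [mul_div_mul_left _ _ h1]
    simpa [heq2] using Real.summable_pow_div_factorial R
  have hA_mem : A ∈ Metric.ball (0 : (Matrix (Fin n) (Fin n) ℂ)) R := by
    rw [Metric.mem_ball, dist_zero_right]; linarith
  -- derivative bound on the ball
  have hbound : ∀ k : ℕ, ∀ x : (Matrix (Fin n) (Fin n) ℂ), x ∈ Metric.ball (0 : (Matrix (Fin n) (Fin n) ℂ)) R →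
      ‖((k.factorial : ℂ)⁻¹) • powDeriv k x‖ ≤ u k := by
    intro k x hx
    rw [Metric.mem_ball, dist_zero_right] at hx
    have hpd : ‖powDeriv k x‖ ≤ (k : ℝ) * R ^ (k - 1) := by
      calc ‖powDeriv k x‖ ≤ ∑ i ∈ Finset.range k,
              ‖ContinuousLinearMap.mulLeftRight ℂ (Matrix (Fin n) (Fin n) ℂ) (x ^ i) (x ^ (k - 1 - i))‖ :=
            norm_sum_le _ _
        _ ≤ ∑ i ∈ Finset.range k, R ^ (k - 1) := by
            refine Finset.sum_le_sum fun i hi => ?_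
            rw [Finset.mem_range] at hi
            have hmaxR : max 1 ‖x‖ ≤ R := max_le hR1 hx.le
            have hmax0 : (0 : ℝ) ≤ max 1 ‖x‖ := by positivity
            calc ‖ContinuousLinearMap.mulLeftRight ℂ (Matrix (Fin n) (Fin n) ℂ) (x ^ i) (x ^ (k - 1 - i))‖
                ≤ ‖x ^ i‖ * ‖x ^ (k - 1 - i)‖ :=
                  ContinuousLinearMap.opNorm_mulLeftRight_apply_apply_le ℂ (Matrix (Fin n) (Fin n) ℂ) _ _
              _ ≤ max 1 ‖x‖ ^ i * max 1 ‖x‖ ^ (k - 1 - i) :=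
                  mul_le_mul (norm_pow_le_aux x i) (norm_pow_le_aux x _) (norm_nonneg _)
                    (by positivity)
              _ = max 1 ‖x‖ ^ (k - 1) := by
                  rw [← pow_add]; congr 1; omega
              _ ≤ R ^ (k - 1) := pow_le_pow_left₀ hmax0 hmaxR _
        _ = (k : ℝ) * R ^ (k - 1) := by
            rw [Finset.sum_const, Finset.card_range, nsmul_eq_mul]
    rw [norm_smul ((k.factorial : ℂ))⁻¹ (powDeriv k x)]
    have hnorm : ‖((k.factorial : ℂ))⁻¹‖ = ((k.factorial : ℝ))⁻¹ := by
      rw [norm_inv]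
      norm_cast
    rw [hnorm]
    have hux : u k = ((k.factorial : ℝ))⁻¹ * ((k : ℝ) * R ^ (k - 1)) := by
      simp only [hu_def]
      ring
    rw [hux]
    exact mul_le_mul_of_nonneg_left hpd (by positivity)
  -- each term is differentiable
  have hderiv : ∀ k : ℕ, ∀ x : (Matrix (Fin n) (Fin n) ℂ), x ∈ Metric.ball (0 : (Matrix (Fin n) (Fin n) ℂ)) R →
      HasFDerivAt (fun y : (Matrix (Fin n) (Fin n) ℂ) => ((k.factorial : ℂ))⁻¹ • y ^ k) (((k.factorial : ℂ))⁻¹ • powDeriv k x) x :=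
    fun k x _ => by exact (hasFDerivAt_pow_aux k x).const_smul ((k.factorial : ℂ))⁻¹
  have hsumA : Summable fun k : ℕ => ((k.factorial : ℂ))⁻¹ • A ^ k :=
    NormedSpace.expSeries_summable' (𝕂 := ℂ) A
  have key : HasFDerivAt (fun y : (Matrix (Fin n) (Fin n) ℂ) => ∑' k : ℕ, ((k.factorial : ℂ))⁻¹ • y ^ k)
      (∑' k : ℕ, ((k.factorial : ℂ))⁻¹ • powDeriv k A) A :=
    hasFDerivAt_tsum_of_isPreconnected hu Metric.isOpen_ball
      (convex_ball (0 : (Matrix (Fin n) (Fin n) ℂ)) R).isPreconnected hderiv hbound hA_mem hsumA hA_mem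
  have hexp_eq : (fun y : (Matrix (Fin n) (Fin n) ℂ) => ∑' k : ℕ, ((k.factorial : ℂ))⁻¹ • y ^ k) = NormedSpace.exp := by
    funext y
    rw [NormedSpace.exp_eq_tsum (𝕂 := ℂ)]
  rw [hexp_eq] at key
  refine ⟨∑' k : ℕ, ((k.factorial : ℂ))⁻¹ • powDeriv k A, ?_, key⟩
  intro E
  show (∑' k : ℕ, ((k.factorial : ℂ))⁻¹ • powDeriv k A) E = Lexp A A E
  haveI := clm_completeSpace_aux (E := Matrix (Fin n) (Fin n) ℂ) (F := Matrix (Fin n) (Fin n) ℂ)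
  -- summability of the series of derivatives
  have hsummD : Summable fun k : ℕ => ((k.factorial : ℂ))⁻¹ • powDeriv k A :=
    Summable.of_norm_bounded hu fun k => hbound k A hA_mem
  -- apply the evaluation map to the tsum
  have happly : (∑' k : ℕ, ((k.factorial : ℂ))⁻¹ • powDeriv k A) E
      = ∑' k : ℕ, ((k.factorial : ℂ))⁻¹ • powDeriv k A E := by
    have := (ContinuousLinearMap.apply ℂ (Matrix (Fin n) (Fin n) ℂ) E).map_tsum hsummD
    exact this
  rw [happly]
  -- now compute the right hand side
  rw [Lexp, NormedSpace.exp_eq_tsum (𝕂 := ℂ)]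
  -- `toBlocks₁₂` as a continuous linear map
  let T : Matrix (Fin n ⊕ Fin n) (Fin n ⊕ Fin n) ℂ →L[ℂ] (Matrix (Fin n) (Fin n) ℂ) :=
    LinearMap.toContinuousLinearMap
      { toFun := Matrix.toBlocks₁₂
        map_add' := fun _ _ => rfl
        map_smul' := fun _ _ => rfl }
  have hsumB : Summable fun k : ℕ =>
      ((k.factorial : ℂ))⁻¹ • (Matrix.fromBlocks A E 0 A) ^ k :=
    NormedSpace.expSeries_summable' (𝕂 := ℂ) _
  have hT : (∑' k : ℕ, ((k.factorial : ℂ))⁻¹ • (Matrix.fromBlocks A E 0 A) ^ k).toBlocks₁₂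
      = ∑' k : ℕ, T (((k.factorial : ℂ))⁻¹ • (Matrix.fromBlocks A E 0 A) ^ k) :=
    T.map_tsum hsumB
  rw [hT]
  refine tsum_congr fun k => ?_
  have : T (((k.factorial : ℂ))⁻¹ • (Matrix.fromBlocks A E 0 A) ^ k)
      = ((k.factorial : ℂ))⁻¹ • ((Matrix.fromBlocks A E 0 A) ^ k).toBlocks₁₂ := by
    exact T.map_smul _ _
  rw [this, fromBlocks_pow, Matrix.toBlocks_fromBlocks₁₂, powDeriv_apply]
end
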